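/- Let p be a prime and c an integer with 5 ≤ c < p. Let V = {(x_1, …, x_c) ∈ F_p^c : Σ x_i = 0} be the deleted permutation module, let H be A_c or S_c acting on V by permuting coordinates, let Z_0 be a subgroup of the scalar matrices F_p^× acting on V, and let G = Z_0·H ≤ GL(V). Then the G-orbit of v_1 = (1, −1, 0, …, 0) has size c(c−1)|Z_0|/gcd(2, |Z_0|) and the G-orbit of v_2 = (1, 1, −2, 0, …, 0) has size 3|Z_0|·binom(c,3); these sizes are unequal, so G is not ½-transitive on V∖{0}. -/

import Mathlib

def pairVec {p c : ℕ} (z : ZMod p) (a b : Fin c) : Fin c → ZMod p :=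
  fun i => if i = a then z else if i = b then -z else 0

def tripVec {p c : ℕ} (z : ZMod p) (a b d : Fin c) : Fin c → ZMod p :=
  fun i => if i = a then z else if i = b then z else if i = d then -2 * z else 0


open Equiv

/-- Adjust a permutation to lie in `H` without changing its values at points mapping
into a small finset `t`. -/
lemma my_adjust {c : ℕ} (hc : 5 ≤ c) (H : Subgroup (Equiv.Perm (Fin c)))
    (hH : H = alternatingGroup (Fin c) ∨ H = ⊤) (τ : Equiv.Perm (Fin c))
    (t : Finset (Fin c)) (ht : t.card ≤ 3) :
    ∃ σ ∈ H, ∀ i, τ i ∈ t → σ i = τ i := by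
  rcases hH with rfl | rfl
  · by_cases hτ : Equiv.Perm.sign τ = 1
    · exact ⟨τ, Equiv.Perm.mem_alternatingGroup.2 hτ, fun i _ => rfl⟩
    · have hτ' : Equiv.Perm.sign τ = -1 := (Int.units_eq_one_or _).resolve_left hτ
      have hcard : 1 < tᶜ.card := by
        rw [Finset.card_compl]
        simp only [Fintype.card_fin]
        omega
      obtain ⟨u, hu, w, hw, huw⟩ := Finset.one_lt_card.mp hcard
      refine ⟨Equiv.swap u w * τ, ?_, ?_⟩
      · rw [Equiv.Perm.mem_alternatingGroup, map_mul, Equiv.Perm.sign_swap huw, hτ']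
        decide
      · intro i hi
        simp only [Equiv.Perm.mul_apply]
        apply Equiv.swap_apply_of_ne_of_ne
        · rintro rfl; exact (Finset.mem_compl.mp hu) hi
        · rintro rfl; exact (Finset.mem_compl.mp hw) hi
  · exact ⟨τ, Subgroup.mem_top τ, fun i _ => rfl⟩

lemma my_pair_perm {c : ℕ} (a b x y : Fin c) (hab : a ≠ b) (hxy : x ≠ y) :
    ∃ τ : Equiv.Perm (Fin c), τ a = x ∧ τ b = y := by
  refine ⟨Equiv.swap (Equiv.swap a x b) y * Equiv.swap a x, ?_, ?_⟩
  · simp only [Equiv.Perm.mul_apply, Equiv.swap_apply_left]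
    apply Equiv.swap_apply_of_ne_of_ne
    · intro h
      apply hab
      have : Equiv.swap a x a = Equiv.swap a x b := by
        rw [Equiv.swap_apply_left]; exact h
      exact (Equiv.swap a x).injective this
    · exact hxy
  · simp only [Equiv.Perm.mul_apply, Equiv.swap_apply_left]

lemma my_pair {c : ℕ} (hc : 5 ≤ c) (H : Subgroup (Equiv.Perm (Fin c)))
    (hH : H = alternatingGroup (Fin c) ∨ H = ⊤) (a b x y : Fin c)
    (hab : a ≠ b) (hxy : x ≠ y) : ∃ σ ∈ H, σ a = x ∧ σ b = y := by
  obtain ⟨τ, h1, h2⟩ := my_pair_perm a b x y hab hxy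
  obtain ⟨σ, hσH, hσ⟩ := my_adjust hc H hH τ {x, y}
    ((Finset.card_insert_le _ _).trans (by simp))
  exact ⟨σ, hσH, by rw [hσ a (by simp [h1]), h1], by rw [hσ b (by simp [h2]), h2]⟩

lemma my_triple {c : ℕ} (hc : 5 ≤ c) (H : Subgroup (Equiv.Perm (Fin c)))
    (hH : H = alternatingGroup (Fin c) ∨ H = ⊤) (a b d x y z : Fin c)
    (hab : a ≠ b) (had : a ≠ d) (hbd : b ≠ d)
    (hxy : x ≠ y) (hxz : x ≠ z) (hyz : y ≠ z) :
    ∃ σ ∈ H, σ a = x ∧ σ b = y ∧ σ d = z := by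
  obtain ⟨τ₂, h2a, h2b⟩ := my_pair_perm a b x y hab hxy
  have hdx : τ₂ d ≠ x := by rw [← h2a]; exact fun h => had (τ₂.injective h).symm
  have hdy : τ₂ d ≠ y := by rw [← h2b]; exact fun h => hbd (τ₂.injective h).symm
  set τ : Equiv.Perm (Fin c) := Equiv.swap (τ₂ d) z * τ₂ with hτ
  have hta : τ a = x := by
    simp only [hτ, Equiv.Perm.mul_apply, h2a]
    exact Equiv.swap_apply_of_ne_of_ne (Ne.symm hdx) hxz
  have htb : τ b = y := by
    simp only [hτ, Equiv.Perm.mul_apply, h2b]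
    exact Equiv.swap_apply_of_ne_of_ne (Ne.symm hdy) hyz
  have htd : τ d = z := by simp [hτ, Equiv.Perm.mul_apply, Equiv.swap_apply_left]
  obtain ⟨σ, hσH, hσ⟩ := my_adjust hc H hH τ {x, y, z}
    ((Finset.card_insert_le _ _).trans (by
      simpa using Nat.add_le_add_right ((Finset.card_insert_le y {z}).trans
        (Nat.le_of_eq (congrArg (· + 1) (Finset.card_singleton z)))) 1))
  exact ⟨σ, hσH, by rw [hσ a (by simp [hta]), hta], by rw [hσ b (by simp [htb]), htb],
    by rw [hσ d (by simp [htd]), htd]⟩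


lemma pair_scale_perm {p c : ℕ} (z : ZMod p) (σ : Equiv.Perm (Fin c)) (a b : Fin c) :
    (fun i => z * pairVec 1 a b (σ i)) = pairVec z (σ.symm a) (σ.symm b) := by
  funext i
  simp only [pairVec, Equiv.apply_eq_iff_eq_symm_apply]
  split_ifs <;> ring

lemma trip_scale_perm {p c : ℕ} (z : ZMod p) (σ : Equiv.Perm (Fin c)) (a b d : Fin c) :
    (fun i => z * tripVec 1 a b d (σ i)) = tripVec z (σ.symm a) (σ.symm b) (σ.symm d) := by
  funext i
  simp only [tripVec, Equiv.apply_eq_iff_eq_symm_apply]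
  split_ifs <;> ring

lemma sum_pairVec {p c : ℕ} (z : ZMod p) (a b : Fin c) (hab : a ≠ b) :
    ∑ i, pairVec z a b i = 0 := by
  have : ∀ i, pairVec z a b i = (if i = a then z else 0) + (if i = b then -z else 0) := by
    intro i
    by_cases h1 : i = a
    · subst h1; simp [pairVec, hab]
    · by_cases h2 : i = b
      · subst h2; simp [pairVec, h1]
      · simp [pairVec, h1, h2]
  simp only [this, Finset.sum_add_distrib, Finset.sum_ite_eq', Finset.mem_univ, if_true]
  ring

lemma sum_tripVec {p c : ℕ} (z : ZMod p) (a b d : Fin c)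
    (hab : a ≠ b) (had : a ≠ d) (hbd : b ≠ d) :
    ∑ i, tripVec z a b d i = 0 := by
  have : ∀ i, tripVec z a b d i =
      (if i = a then z else 0) + (if i = b then z else 0) + (if i = d then -2 * z else 0) := by
    intro i
    by_cases h1 : i = a
    · subst h1; simp [tripVec, hab, had]
    · by_cases h2 : i = b
      · subst h2; simp [tripVec, h1, hbd]
      · by_cases h3 : i = d
        · subst h3; simp [tripVec, h1, h2]
        · simp [tripVec, h1, h2, h3]
  simp only [this, Finset.sum_add_distrib, Finset.sum_ite_eq', Finset.mem_univ, if_true]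
  ring

lemma my_neg_one_mem {p : ℕ} [Fact p.Prime] (hp : 5 < p) (Z₀ : Subgroup (ZMod p)ˣ) :
    ((-1 : (ZMod p)ˣ) ∈ Z₀ ↔ 2 ∣ Nat.card Z₀) := by
  haveI : Fact (2 < p) := ⟨by omega⟩
  have hne : (-1 : (ZMod p)ˣ) ≠ 1 := by
    intro h
    apply ZMod.neg_one_ne_one (n := p)
    calc (-1 : ZMod p) = ((-1 : (ZMod p)ˣ) : ZMod p) := by simp
    _ = ((1 : (ZMod p)ˣ) : ZMod p) := by rw [h]
    _ = 1 := by simp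
  have hord : orderOf (-1 : (ZMod p)ˣ) = 2 := by
    apply orderOf_eq_prime
    · simp
    · exact hne
  constructor
  · intro h
    have := Subgroup.orderOf_dvd_natCard Z₀ h
    rwa [hord] at this
  · intro h
    haveI : Fintype Z₀ := Fintype.ofFinite _
    rw [Nat.card_eq_fintype_card] at h
    obtain ⟨g, hg⟩ := exists_prime_orderOf_dvd_card 2 h
    have hgg : g * g = 1 := by
      rw [← sq, ← hg]; exact pow_orderOf_eq_one g
    have hg2 : ((g : (ZMod p)ˣ) : ZMod p) * ((g : (ZMod p)ˣ) : ZMod p) = 1 := by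
      simpa using congrArg (fun x : Z₀ => ((x : (ZMod p)ˣ) : ZMod p)) hgg
    rcases mul_self_eq_one_iff.mp hg2 with h1 | h1
    · exfalso
      have h2 : (g : (ZMod p)ˣ) = 1 := Units.ext h1
      have h3 : g = 1 := by exact_mod_cast h2
      rw [h3] at hg
      simp at hg
    · have h2 : (g : (ZMod p)ˣ) = -1 := Units.ext (by rw [h1]; simp)
      rw [← h2]
      exact g.2

lemma my_card_ne (c : ℕ) : Fintype.card {x : Fin c × Fin c // x.1 ≠ x.2} = c * c - c := by
  have e : {x : Fin c × Fin c // x.1 = x.2} ≃ Fin c :=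
    { toFun := fun x => x.1.1
      invFun := fun i => ⟨(i, i), rfl⟩
      left_inv := fun x => Subtype.ext (Prod.ext rfl x.2)
      right_inv := fun i => rfl }
  have := Fintype.card_subtype_compl (fun x : Fin c × Fin c => x.1 = x.2)
  rw [Fintype.card_congr e, Fintype.card_fin, Fintype.card_prod, Fintype.card_fin] at this
  exact this

lemma my_card_lt (c : ℕ) :
    2 * Fintype.card {x : Fin c × Fin c // x.1 < x.2} = c * c - c := by
  have e1 : {x : Fin c × Fin c // x.1 ≠ x.2} ≃
      {x : Fin c × Fin c // x.1 < x.2 ∨ x.2 < x.1} :=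
    Equiv.subtypeEquivRight (fun x => by
      constructor
      · intro h; exact lt_or_gt_of_ne h
      · rintro (h | h) <;> [exact ne_of_lt h; exact (ne_of_lt h).symm])
  have hdisj : Disjoint (fun x : Fin c × Fin c => x.1 < x.2) (fun x => x.2 < x.1) := by
    rw [Pi.disjoint_iff]
    intro x
    rw [disjoint_iff]
    by_cases h : x.1 < x.2
    · simp [h, asymm h]
    · simp [h]
  have e2 := (e1.trans (subtypeOrEquiv _ _ hdisj))
  have e3 : {x : Fin c × Fin c // x.2 < x.1} ≃ {x : Fin c × Fin c // x.1 < x.2} :=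
    { toFun := fun x => ⟨x.1.swap, by simpa using x.2⟩
      invFun := fun x => ⟨x.1.swap, by simpa using x.2⟩
      left_inv := fun x => Subtype.ext (Prod.swap_swap _)
      right_inv := fun x => Subtype.ext (Prod.swap_swap _) }
  have := Fintype.card_congr e2
  rw [my_card_ne, Fintype.card_sum, Fintype.card_congr e3] at this
  omega

lemma my_card_two_compl {c : ℕ} (a b : Fin c) (hab : a ≠ b) :
    Fintype.card {d : Fin c // d ≠ a ∧ d ≠ b} = c - 2 := by
  have e : {d : Fin c // d ≠ a ∧ d ≠ b} ≃ {d : Fin c // ¬(d = a ∨ d = b)} :=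
    Equiv.subtypeEquivRight (fun d => by tauto)
  rw [Fintype.card_congr e, Fintype.card_subtype_compl, Fintype.card_fin]
  congr 1
  rw [Fintype.card_subtype]
  have : Finset.univ.filter (fun d : Fin c => d = a ∨ d = b) = {a, b} := by
    ext d; simp
  rw [this, Finset.card_insert_of_notMem (by simp [hab]), Finset.card_singleton]


lemma pairVec_swap {p c : ℕ} (z : ZMod p) (a b : Fin c) (hab : a ≠ b) :
    pairVec (-z) b a = pairVec z a b := by
  funext i
  by_cases h1 : i = a
  · subst h1; simp [pairVec, hab]
  · by_cases h2 : i = b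
    · subst h2; simp [pairVec, hab.symm]
    · simp [pairVec, h1, h2]

lemma tripVec_comm {p c : ℕ} (z : ZMod p) (a b d : Fin c) (hab : a ≠ b) :
    tripVec z b a d = tripVec z a b d := by
  funext i
  by_cases h1 : i = a
  · subst h1; simp [tripVec, hab]
  · by_cases h2 : i = b
    · subst h2; simp [tripVec, hab.symm]
    · simp [tripVec, h1, h2]

lemma pairVec_eq_cases {p c : ℕ} (z z' : ZMod p) (a b a' b' : Fin c)
    (hab : a ≠ b) (hab' : a' ≠ b') (hz : z ≠ 0)
    (h : pairVec z a b = pairVec z' a' b') :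
    (z = z' ∧ a = a' ∧ b = b') ∨ (z = -z' ∧ a = b' ∧ b = a') := by
  have ha := congrFun h a
  have hb := congrFun h b
  simp only [pairVec] at ha hb
  rw [if_neg (show ¬b = a from fun hh => hab hh.symm)] at hb
  simp only [if_true] at ha hb
  by_cases h1 : a = a'
  · rw [if_pos h1] at ha
    left
    refine ⟨ha, h1, ?_⟩
    by_cases h2 : b = b'
    · exact h2
    · exfalso
      rw [if_neg (show ¬b = a' from fun hh => hab (hh.trans h1.symm).symm), if_neg h2] at hb
      exact hz (neg_eq_zero.mp hb)
  · rw [if_neg h1] at ha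
    by_cases h2 : a = b'
    · rw [if_pos h2] at ha
      right
      refine ⟨ha, h2, ?_⟩
      by_cases h3 : b = a'
      · exact h3
      · exfalso
        rw [if_neg h3, if_neg (show ¬b = b' from fun hh => hab (hh.trans h2.symm).symm)] at hb
        exact hz (neg_eq_zero.mp hb)
    · rw [if_neg h2] at ha
      exact absurd ha hz

lemma tripVec_eq_cases {p c : ℕ} [Fact p.Prime] (z z' : ZMod p) (a b d a' b' d' : Fin c)
    (hab : a ≠ b) (had : a ≠ d) (hbd : b ≠ d)
    (hab' : a' ≠ b') (had' : a' ≠ d') (hbd' : b' ≠ d')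
    (hz : z ≠ 0) (hz' : z' ≠ 0) (h2 : (2 : ZMod p) ≠ 0) (h3 : (3 : ZMod p) ≠ 0)
    (h : tripVec z a b d = tripVec z' a' b' d') :
    z = z' ∧ d = d' ∧ ((a = a' ∧ b = b') ∨ (a = b' ∧ b = a')) := by
  have key : d = d' := by
    by_contra hdd
    have hd := congrFun h d
    rw [show tripVec z a b d d = -2 * z from by simp [tripVec, Ne.symm had, Ne.symm hbd]] at hd
    have hcase : d = a' ∨ d = b' := by
      by_contra hno
      push_neg at hno
      rw [show tripVec z' a' b' d' d = 0 from by simp [tripVec, hno.1, hno.2, hdd]] at hd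
      exact (mul_ne_zero (neg_ne_zero.mpr h2) hz) hd
    have hz'eq : -2 * z = z' := by
      rcases hcase with h' | h'
      · rwa [show tripVec z' a' b' d' d = z' from by simp [tripVec, h']] at hd
      · rwa [show tripVec z' a' b' d' d = z' from by
          simp [tripVec, h', show ¬d = a' from fun hh => hab' (hh.symm.trans h')]] at hd
    have hd' := congrFun h d'
    rw [show tripVec z' a' b' d' d' = -2 * z' from by
      simp [tripVec, Ne.symm had', Ne.symm hbd']] at hd'
    have hcase' : d' = a ∨ d' = b := by
      by_contra hno
      push_neg at hno
      rw [show tripVec z a b d d' = 0 from by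
        simp [tripVec, hno.1, hno.2, show ¬d' = d from fun hh => hdd hh.symm]] at hd'
      exact (mul_ne_zero (neg_ne_zero.mpr h2) hz') hd'.symm
    have hzeq : z = -2 * z' := by
      rcases hcase' with h' | h'
      · rw [show tripVec z a b d d' = z from by simp [tripVec, h']] at hd'
        exact hd'
      · rw [show tripVec z a b d d' = z from by
          simp [tripVec, h', show ¬d' = a from fun hh => hab (hh.symm.trans h')]] at hd'
        exact hd'
    have hz4 : z = 4 * z := by
      calc z = -2 * z' := hzeq
      _ = -2 * (-2 * z) := by rw [hz'eq]
      _ = 4 * z := by ring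
    have h30 : (3 : ZMod p) * z = 0 := by linear_combination -hz4
    rcases mul_eq_zero.mp h30 with h' | h'
    · exact h3 h'
    · exact hz h'
  subst key
  have hd := congrFun h d
  rw [show tripVec z a b d d = -2 * z from by simp [tripVec, Ne.symm had, Ne.symm hbd],
    show tripVec z' a' b' d d = -2 * z' from by
      simp [tripVec, Ne.symm had', Ne.symm hbd']] at hd
  have hzz : z = z' := mul_left_cancel₀ (neg_ne_zero.mpr h2) hd
  refine ⟨hzz, rfl, ?_⟩
  have ha := congrFun h a
  rw [show tripVec z a b d a = z from by simp [tripVec]] at ha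
  have hA : a = a' ∨ a = b' := by
    by_contra hno
    push_neg at hno
    rw [show tripVec z' a' b' d a = 0 from by simp [tripVec, hno.1, hno.2, had]] at ha
    exact hz ha
  have hb := congrFun h b
  rw [show tripVec z a b d b = z from by simp [tripVec, Ne.symm hab]] at hb
  have hB : b = a' ∨ b = b' := by
    by_contra hno
    push_neg at hno
    rw [show tripVec z' a' b' d b = 0 from by simp [tripVec, hno.1, hno.2, hbd]] at hb
    exact hz hb
  rcases hA with hA | hA <;> rcases hB with hB | hB
  · exact absurd (hA.trans hB.symm) hab
  · exact Or.inl ⟨hA, hB⟩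
  · exact Or.inr ⟨hA, hB⟩
  · exact absurd (hA.trans hB.symm) hab

lemma my_mul_sub (c : ℕ) : c * (c - 1) = c * c - c := by
  cases c with
  | zero => simp
  | succ k => rw [Nat.succ_sub_one, Nat.mul_succ, Nat.add_sub_cancel]

lemma my_card_S1 {p c : ℕ} [Fact p.Prime] (hc : 5 ≤ c) (hcp : c < p)
    (Z₀ : Subgroup (ZMod p)ˣ) :
    Nat.card {x : Fin c → ZMod p | ∃ z ∈ Z₀, ∃ a b : Fin c, a ≠ b ∧
        x = pairVec (z : ZMod p) a b} =
      c * (c - 1) * Nat.card Z₀ / Nat.gcd 2 (Nat.card Z₀) := by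
  have hp5 : 5 < p := lt_of_le_of_lt hc hcp
  have hcc := my_mul_sub c
  by_cases hm : (-1 : (ZMod p)ˣ) ∈ Z₀
  · have h2n : 2 ∣ Nat.card Z₀ := (my_neg_one_mem hp5 Z₀).mp hm
    set g : Z₀ × {x : Fin c × Fin c // x.1 < x.2} → (Fin c → ZMod p) :=
      fun w => pairVec ((w.1 : (ZMod p)ˣ) : ZMod p) w.2.1.1 w.2.1.2 with hg
    have hrange : {x : Fin c → ZMod p | ∃ z ∈ Z₀, ∃ a b : Fin c, a ≠ b ∧
        x = pairVec (z : ZMod p) a b} = Set.range g := by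
      ext x
      simp only [Set.mem_setOf_eq, Set.mem_range]
      constructor
      · rintro ⟨z, hz, a, b, hab, rfl⟩
        rcases lt_or_gt_of_ne hab with h | h
        · exact ⟨(⟨z, hz⟩, ⟨(a, b), h⟩), rfl⟩
        · refine ⟨(⟨-z, ?_⟩, ⟨(b, a), h⟩), ?_⟩
          · rw [show -z = -1 * z from (neg_one_mul z).symm]
            exact Z₀.mul_mem hm hz
          · show pairVec (((-z : (ZMod p)ˣ)) : ZMod p) b a = pairVec (z : ZMod p) a b
            rw [Units.val_neg]
            exact pairVec_swap _ a b hab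
      · rintro ⟨⟨z, ⟨⟨a, b⟩, hab⟩⟩, rfl⟩
        exact ⟨z.1, z.2, a, b, ne_of_lt hab, rfl⟩
    have hginj : Function.Injective g := by
      rintro ⟨z, ⟨⟨a, b⟩, hab⟩⟩ ⟨z', ⟨⟨a', b'⟩, hab'⟩⟩ hgg
      rcases pairVec_eq_cases _ _ _ _ _ _ (ne_of_lt hab) (ne_of_lt hab')
          (Units.ne_zero _) hgg with ⟨hzz, h1, h2⟩ | ⟨hzz, h1, h2⟩
      · subst h1; subst h2
        have : z = z' := Subtype.ext (Units.ext hzz)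
        subst this
        rfl
      · exfalso
        have p1 : a < a' := lt_of_lt_of_eq hab h2
        have p2 : a' < a := lt_of_lt_of_eq hab' h1.symm
        exact absurd (p1.trans p2) (lt_irrefl a)
    rw [hrange, Nat.card_range_of_injective hginj, Nat.card_prod,
      Nat.card_eq_fintype_card (α := {x : Fin c × Fin c // x.1 < x.2}),
      Nat.gcd_eq_left h2n, hcc, ← my_card_lt c, mul_assoc,
      Nat.mul_div_cancel_left _ (by norm_num : (0:ℕ) < 2)]
    exact Nat.mul_comm _ _
  · have h2n : ¬ 2 ∣ Nat.card Z₀ := fun hh => hm ((my_neg_one_mem hp5 Z₀).mpr hh)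
    have hgcd : Nat.gcd 2 (Nat.card Z₀) = 1 := by
      rcases (Nat.dvd_prime Nat.prime_two).mp (Nat.gcd_dvd_left 2 (Nat.card Z₀)) with h | h
      · exact h
      · exact absurd (h ▸ Nat.gcd_dvd_right 2 (Nat.card Z₀)) h2n
    set g : Z₀ × {x : Fin c × Fin c // x.1 ≠ x.2} → (Fin c → ZMod p) :=
      fun w => pairVec ((w.1 : (ZMod p)ˣ) : ZMod p) w.2.1.1 w.2.1.2 with hg
    have hrange : {x : Fin c → ZMod p | ∃ z ∈ Z₀, ∃ a b : Fin c, a ≠ b ∧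
        x = pairVec (z : ZMod p) a b} = Set.range g := by
      ext x
      simp only [Set.mem_setOf_eq, Set.mem_range]
      constructor
      · rintro ⟨z, hz, a, b, hab, rfl⟩
        exact ⟨(⟨z, hz⟩, ⟨(a, b), hab⟩), rfl⟩
      · rintro ⟨⟨z, ⟨⟨a, b⟩, hab⟩⟩, rfl⟩
        exact ⟨z.1, z.2, a, b, hab, rfl⟩
    have hginj : Function.Injective g := by
      rintro ⟨z, ⟨⟨a, b⟩, hab⟩⟩ ⟨z', ⟨⟨a', b'⟩, hab'⟩⟩ hgg
      rcases pairVec_eq_cases _ _ _ _ _ _ hab hab' (Units.ne_zero _) hgg with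
        ⟨hzz, h1, h2⟩ | ⟨hzz, h1, h2⟩
      · subst h1; subst h2
        have : z = z' := Subtype.ext (Units.ext hzz)
        subst this
        rfl
      · exfalso
        apply hm
        have hu : (z : (ZMod p)ˣ) = -(z' : (ZMod p)ˣ) := Units.ext (by
          rw [Units.val_neg]; exact hzz)
        have key : (z : (ZMod p)ˣ) * ((z' : (ZMod p)ˣ))⁻¹ = -1 := by
          rw [hu]; simp
        rw [← key]
        exact Z₀.mul_mem z.2 (Z₀.inv_mem z'.2)
    rw [hrange, Nat.card_range_of_injective hginj, Nat.card_prod,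
      Nat.card_eq_fintype_card (α := {x : Fin c × Fin c // x.1 ≠ x.2}),
      my_card_ne c, hgcd, Nat.div_one, hcc]
    exact Nat.mul_comm _ _

lemma my_card_S2 {p c : ℕ} [Fact p.Prime] (hc : 5 ≤ c) (hcp : c < p)
    (Z₀ : Subgroup (ZMod p)ˣ) :
    Nat.card {x : Fin c → ZMod p | ∃ z ∈ Z₀, ∃ a b d : Fin c, a ≠ b ∧ a ≠ d ∧ b ≠ d ∧
        x = tripVec (z : ZMod p) a b d} = 3 * Nat.card Z₀ * c.choose 3 := by
  have hp5 : 5 < p := lt_of_le_of_lt hc hcp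
  have h2 : (2 : ZMod p) ≠ 0 := by
    have : ¬ ((2 : ℕ) : ZMod p) = 0 := by
      rw [ZMod.natCast_eq_zero_iff]
      intro hd
      have := Nat.le_of_dvd (by norm_num) hd
      omega
    simpa using this
  have h3 : (3 : ZMod p) ≠ 0 := by
    have : ¬ ((3 : ℕ) : ZMod p) = 0 := by
      rw [ZMod.natCast_eq_zero_iff]
      intro hd
      have := Nat.le_of_dvd (by norm_num) hd
      omega
    simpa using this
  set g : (Z₀ × Σ q : {x : Fin c × Fin c // x.1 < x.2}, {e : Fin c // e ≠ q.1.1 ∧ e ≠ q.1.2})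
      → (Fin c → ZMod p) :=
    fun w => tripVec ((w.1 : (ZMod p)ˣ) : ZMod p) w.2.1.1.1 w.2.1.1.2 w.2.2.1 with hg
  have hrange : {x : Fin c → ZMod p | ∃ z ∈ Z₀, ∃ a b d : Fin c, a ≠ b ∧ a ≠ d ∧ b ≠ d ∧
      x = tripVec (z : ZMod p) a b d} = Set.range g := by
    ext x
    simp only [Set.mem_setOf_eq, Set.mem_range]
    constructor
    · rintro ⟨z, hz, a, b, d, hab, had, hbd, rfl⟩
      rcases lt_or_gt_of_ne hab with h | h
      · exact ⟨(⟨z, hz⟩, ⟨⟨(a, b), h⟩, ⟨d, Ne.symm had, Ne.symm hbd⟩⟩), rfl⟩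
      · refine ⟨(⟨z, hz⟩, ⟨⟨(b, a), h⟩, ⟨d, Ne.symm hbd, Ne.symm had⟩⟩), ?_⟩
        exact (tripVec_comm (z : ZMod p) a b d hab).symm ▸ rfl
    · rintro ⟨⟨z, ⟨⟨⟨a, b⟩, hab⟩, ⟨e, he1, he2⟩⟩⟩, rfl⟩
      exact ⟨z.1, z.2, a, b, e, ne_of_lt hab, Ne.symm he1, Ne.symm he2, rfl⟩
  have hginj : Function.Injective g := by
    rintro ⟨z, ⟨⟨⟨a, b⟩, hab⟩, ⟨e, he1, he2⟩⟩⟩ ⟨z', ⟨⟨⟨a', b'⟩, hab'⟩, ⟨e', he1', he2'⟩⟩⟩ hgg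
    obtain ⟨hzz, hdd, hcross⟩ := tripVec_eq_cases _ _ _ _ _ _ _ _
      (ne_of_lt hab) (Ne.symm he1) (Ne.symm he2)
      (ne_of_lt hab') (Ne.symm he1') (Ne.symm he2')
      (Units.ne_zero _) (Units.ne_zero _) h2 h3 hgg
    rcases hcross with ⟨h1, h2'⟩ | ⟨h1, h2'⟩
    · subst h1; subst h2'; subst hdd
      have : z = z' := Subtype.ext (Units.ext hzz)
      subst this
      rfl
    · exfalso
      have p1 : a < a' := lt_of_lt_of_eq hab h2'
      have p2 : a' < a := lt_of_lt_of_eq hab' h1.symm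
      exact absurd (p1.trans p2) (lt_irrefl a)
  have hsig : Fintype.card
      (Σ q : {x : Fin c × Fin c // x.1 < x.2}, {e : Fin c // e ≠ q.1.1 ∧ e ≠ q.1.2}) =
      Fintype.card {x : Fin c × Fin c // x.1 < x.2} * (c - 2) := by
    rw [Fintype.card_sigma]
    rw [Finset.sum_congr rfl (fun q _ => my_card_two_compl q.1.1 q.1.2 (ne_of_lt q.2)),
      Finset.sum_const, smul_eq_mul, Finset.card_univ]
  have hK := my_card_lt c
  have hcc := my_mul_sub c
  have hch2 := Nat.choose_two_right c
  have hid : c.choose 3 * 3 = c.choose 2 * (c - 2) := by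
    simpa using Nat.choose_succ_right_eq c 2
  have hKc : Fintype.card {x : Fin c × Fin c // x.1 < x.2} = c.choose 2 := by omega
  rw [hrange, Nat.card_range_of_injective hginj, Nat.card_prod,
    Nat.card_eq_fintype_card
      (α := Σ q : {x : Fin c × Fin c // x.1 < x.2}, {e : Fin c // e ≠ q.1.1 ∧ e ≠ q.1.2}),
    hsig, hKc]
  rw [← hid]
  ring

/-- **Case (1) in the proof of Lemma 2.5 (Liebeck–Praeger–Saxl).** For the deleted
permutation module `V = {x ∈ 𝔽_p^c : Σ x_i = 0}` of `A_c` or `S_c` (`5 ≤ c < p`), with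
scalars `Z₀ ≤ 𝔽_p^×`, the `G = Z₀·H`-orbit of `v₁ = (1,-1,0,…,0)` has size
`c(c-1)|Z₀|/gcd(2,|Z₀|)` and that of `v₂ = (1,1,-2,0,…,0)` has size `3|Z₀|·C(c,3)`; these
are unequal, so `G` is not `½`-transitive on `V∖{0}`. -/
theorem deleted_permutation_module_not_halfTransitive
    (p c : ℕ) [Fact p.Prime] (hc : 5 ≤ c) (hcp : c < p)
    (H : Subgroup (Equiv.Perm (Fin c)))
    (hH : H = alternatingGroup (Fin c) ∨ H = ⊤)
    (Z₀ : Subgroup (ZMod p)ˣ)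
    (v₁ v₂ : Fin c → ZMod p)
    (hv₁ : v₁ = fun (i : Fin c) => if (i : ℕ) = 0 then 1 else if (i : ℕ) = 1 then -1 else 0)
    (hv₂ : v₂ = fun (i : Fin c) => if (i : ℕ) = 0 then 1 else if (i : ℕ) = 1 then 1 else
      if (i : ℕ) = 2 then -2 else 0)
    -- `Orb v` is the orbit of `v` under `G = Z₀·H` acting by scalars and permutation of
    -- coordinates:
    (Orb : (Fin c → ZMod p) → Set (Fin c → ZMod p))
    (hOrb : ∀ v, Orb v =
      {x | ∃ z ∈ Z₀, ∃ σ ∈ H, x = fun i => (z : ZMod p) * v (σ i)}) :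
    Nat.card (Orb v₁) = c * (c - 1) * Nat.card Z₀ / Nat.gcd 2 (Nat.card Z₀) ∧
    Nat.card (Orb v₂) = 3 * Nat.card Z₀ * c.choose 3 ∧
    Nat.card (Orb v₁) ≠ Nat.card (Orb v₂) ∧
    ¬ (∀ v w : Fin c → ZMod p, (∑ i, v i) = 0 → v ≠ 0 → (∑ i, w i) = 0 → w ≠ 0 →
        Nat.card (Orb v) = Nat.card (Orb w)) := by

  have hp5 : 5 < p := lt_of_le_of_lt hc hcp
  obtain ⟨i0, hi0⟩ : ∃ i : Fin c, (i : ℕ) = 0 := ⟨⟨0, by omega⟩, rfl⟩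
  obtain ⟨i1, hi1⟩ : ∃ i : Fin c, (i : ℕ) = 1 := ⟨⟨1, by omega⟩, rfl⟩
  obtain ⟨i2, hi2⟩ : ∃ i : Fin c, (i : ℕ) = 2 := ⟨⟨2, by omega⟩, rfl⟩
  have h01 : i0 ≠ i1 := by simp [Fin.ext_iff, hi0, hi1]
  have h02 : i0 ≠ i2 := by simp [Fin.ext_iff, hi0, hi2]
  have h12 : i1 ≠ i2 := by simp [Fin.ext_iff, hi1, hi2]
  have hv1' : v₁ = pairVec (1 : ZMod p) i0 i1 := by
    rw [hv₁]
    funext i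
    simp only [pairVec, Fin.ext_iff, hi0, hi1]
  have hv2' : v₂ = tripVec (1 : ZMod p) i0 i1 i2 := by
    rw [hv₂]
    funext i
    simp only [tripVec, Fin.ext_iff, hi0, hi1, hi2, mul_one]
  have hOrb1 : Orb v₁ = {x : Fin c → ZMod p | ∃ z ∈ Z₀, ∃ a b : Fin c, a ≠ b ∧
      x = pairVec (z : ZMod p) a b} := by
    rw [hOrb v₁, hv1']
    ext x
    simp only [Set.mem_setOf_eq]
    constructor
    · rintro ⟨z, hz, σ, hσ, rfl⟩
      exact ⟨z, hz, σ.symm i0, σ.symm i1, fun hh => h01 (σ.symm.injective hh),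
        pair_scale_perm _ σ i0 i1⟩
    · rintro ⟨z, hz, a, b, hab, rfl⟩
      obtain ⟨σ, hσ, h1, h2⟩ := my_pair hc H hH a b i0 i1 hab h01
      refine ⟨z, hz, σ, hσ, ?_⟩
      rw [pair_scale_perm (z : ZMod p) σ i0 i1,
        show σ.symm i0 = a from by rw [← h1, Equiv.symm_apply_apply],
        show σ.symm i1 = b from by rw [← h2, Equiv.symm_apply_apply]]
  have hOrb2 : Orb v₂ = {x : Fin c → ZMod p | ∃ z ∈ Z₀, ∃ a b d : Fin c,
      a ≠ b ∧ a ≠ d ∧ b ≠ d ∧ x = tripVec (z : ZMod p) a b d} := by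
    rw [hOrb v₂, hv2']
    ext x
    simp only [Set.mem_setOf_eq]
    constructor
    · rintro ⟨z, hz, σ, hσ, rfl⟩
      exact ⟨z, hz, σ.symm i0, σ.symm i1, σ.symm i2,
        fun hh => h01 (σ.symm.injective hh), fun hh => h02 (σ.symm.injective hh),
        fun hh => h12 (σ.symm.injective hh), trip_scale_perm _ σ i0 i1 i2⟩
    · rintro ⟨z, hz, a, b, d, hab, had, hbd, rfl⟩
      obtain ⟨σ, hσ, h1, h2, h3⟩ := my_triple hc H hH a b d i0 i1 i2 hab had hbd h01 h02 h12
      refine ⟨z, hz, σ, hσ, ?_⟩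
      rw [trip_scale_perm (z : ZMod p) σ i0 i1 i2,
        show σ.symm i0 = a from by rw [← h1, Equiv.symm_apply_apply],
        show σ.symm i1 = b from by rw [← h2, Equiv.symm_apply_apply],
        show σ.symm i2 = d from by rw [← h3, Equiv.symm_apply_apply]]
  have c1 : Nat.card (Orb v₁) = c * (c - 1) * Nat.card Z₀ / Nat.gcd 2 (Nat.card Z₀) := by
    rw [hOrb1]
    exact my_card_S1 hc hcp Z₀
  have c2 : Nat.card (Orb v₂) = 3 * Nat.card Z₀ * c.choose 3 := by
    rw [hOrb2]
    exact my_card_S2 hc hcp Z₀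
  -- the two cardinalities differ
  have hne : Nat.card (Orb v₁) ≠ Nat.card (Orb v₂) := by
    rw [c1, c2]
    have hn1 : 0 < Nat.card Z₀ := Nat.card_pos
    have hch2 := Nat.choose_two_right c
    have hid : c.choose 3 * 3 = c.choose 2 * (c - 2) := by
      simpa using Nat.choose_succ_right_eq c 2
    have heven : 2 * (c.choose 2) = c * (c - 1) := by
      obtain ⟨r, hr⟩ := Nat.even_mul_pred_self c
      omega
    have hc2pos : 0 < c.choose 2 := Nat.choose_pos (by omega)
    set n := Nat.card Z₀
    set t := c.choose 2 * n with ht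
    have htpos : 0 < t := Nat.mul_pos hc2pos hn1
    have hA : c * (c - 1) * n / Nat.gcd 2 n ≤ 2 * t := by
      calc c * (c - 1) * n / Nat.gcd 2 n ≤ c * (c - 1) * n := Nat.div_le_self _ _
      _ = 2 * t := by rw [← heven, ht]; ring
    have hB : 3 * t ≤ 3 * n * c.choose 3 := by
      have h1 : 3 * n * c.choose 3 = t * (c - 2) := by
        calc 3 * n * c.choose 3 = n * (c.choose 3 * 3) := by ring
        _ = n * (c.choose 2 * (c - 2)) := by rw [hid]
        _ = t * (c - 2) := by rw [ht]; ring
      rw [h1]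
      calc 3 * t = t * 3 := by ring
      _ ≤ t * (c - 2) := Nat.mul_le_mul_left t (by omega)
    omega
  refine ⟨c1, c2, hne, fun hall => ?_⟩
  apply hne
  apply hall
  · rw [hv1']; exact sum_pairVec 1 i0 i1 h01
  · intro hh
    have := congrFun hh i0
    rw [hv1'] at this
    simp [pairVec] at this
  · rw [hv2']; exact sum_tripVec 1 i0 i1 i2 h01 h02 h12
  · intro hh
    have := congrFun hh i2
    rw [hv2'] at this
    simp [tripVec, Ne.symm h02, Ne.symm h12] at this
    -- this : -2*1 = 0 in ZMod p: contradiction since 2 ≠ 0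
    exact absurd this (by
      have : ¬ ((2 : ℕ) : ZMod p) = 0 := by
        rw [ZMod.natCast_eq_zero_iff]
        intro hd
        have := Nat.le_of_dvd (by norm_num) hd
        omega
      simpa using this)
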